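/- Let k ≥ 1 and let Δ₁,…,Δ_{2k} be a ladder of integer segments, Δ_j = [a_j,b_j], such that Δ_{2j−1} = νΔ_{2j} for every 1 ≤ j ≤ k. Fix 1 ≤ i ≤ 2k−1 with a_i ≤ b_{i+1} + 1, and let 𝔪_i be the multiset obtained from {Δ₁,…,Δ_{2k}} by removing Δ_i and Δ_{i+1} and adding the segment [a_{i+1}, b_i], together with the segment [a_i, b_{i+1}] in case a_i ≤ b_{i+1}. Then 𝔪_i is not of Speh type. -/

import Mathlib

/-- An integer segment `[a,b]` with `a ≤ b`; `left` is its beginning, `right` is its end. -/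
structure Segment where
  left : ℤ
  right : ℤ
  le : left ≤ right

/-- `ν[a,b] = [a+1,b+1]`. -/
def Segment.nu (Δ : Segment) : Segment :=
  ⟨Δ.left + 1, Δ.right + 1, by have := Δ.le; omega⟩

noncomputable instance : DecidableEq Segment := Classical.decEq _

/-- A multiset of segments is of Speh type if it equals `𝔪' + ν𝔪'` for some `𝔪'`. -/
def SpehType (m : Multiset Segment) : Prop :=
  ∃ m' : Multiset Segment, m = m' + m'.map Segment.nu

/-- The length of a segment. -/
def Segment.len (s : Segment) : ℤ := s.right - s.left

lemma Segment.len_nu (s : Segment) : s.nu.len = s.len := by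
  simp [Segment.len, Segment.nu]

/-- In a Speh-type multiset, the number of segments of each length is even. -/
lemma speh_even_count {m : Multiset Segment} (h : SpehType m) (ℓ : ℤ) :
    Even ((m.map Segment.len).count ℓ) := by
  obtain ⟨m', rfl⟩ := h
  have : (m'.map Segment.nu).map Segment.len = m'.map Segment.len := by
    rw [Multiset.map_map]
    exact Multiset.map_congr rfl fun s _ => Segment.len_nu s
  rw [Multiset.map_add, this, Multiset.count_add]
  exact ⟨_, rfl⟩

lemma even_sum_pairs (n : ℕ) (g : ℕ → ℕ) (hg : ∀ j, g (2 * j) = g (2 * j + 1)) :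
    Even (∑ q ∈ Finset.range (2 * n), g q) := by
  induction n with
  | zero => simp
  | succ n ih =>
      have h2 : 2 * (n + 1) = (2 * n + 1) + 1 := by ring
      rw [h2, Finset.sum_range_succ, Finset.sum_range_succ]
      obtain ⟨c, hc⟩ := ih
      have hgn := hg n
      exact ⟨c + g (2 * n), by omega⟩

/-- Key abstract lemma. -/
lemma key (M : Multiset Segment) (hM : ∀ ℓ : ℤ, Even ((M.map Segment.len).count ℓ))
    (A B : Segment) (hA : A ∈ M) (hB : B ∈ M)
    (hl : B.left < A.left) (hr : B.right < A.right)
    (U : Segment) (hU1 : U.left = B.left) (hU2 : U.right = A.right)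
    (mI : Multiset Segment) (hmI : ∀ s ∈ mI, s.len < U.len) :
    ¬ SpehType (M - {A, B} + (U ::ₘ mI)) := by
  intro hS
  have hAB : A ≠ B := fun h => by rw [h] at hr; omega
  have hpairle : ({A, B} : Multiset Segment) ≤ M := by
    refine Multiset.le_iff_count.mpr fun s => ?_
    rw [show ({A, B} : Multiset Segment) = A ::ₘ {B} from rfl, Multiset.count_cons,
      Multiset.count_singleton]
    by_cases hsA : s = A
    · subst hsA
      have h1 : 1 ≤ Multiset.count s M := Multiset.one_le_count_iff_mem.mpr hA
      simp [hAB]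
      omega
    · by_cases hsB : s = B
      · subst hsB
        have h1 : 1 ≤ Multiset.count s M := Multiset.one_le_count_iff_mem.mpr hB
        simp [hsA]
        omega
      · simp [hsA, hsB]
  have hMsplit : M = M - {A, B} + {A, B} := (tsub_add_cancel_of_le hpairle).symm
  have hAlen : Segment.len A ≠ Segment.len U := by
    unfold Segment.len
    rw [hU1, hU2]
    omega
  have hBlen : Segment.len B ≠ Segment.len U := by
    unfold Segment.len
    rw [hU1, hU2]
    omega
  have hcntpair : ((({A, B} : Multiset Segment)).map Segment.len).count U.len = 0 := by
    rw [show ({A, B} : Multiset Segment) = A ::ₘ {B} from rfl, Multiset.map_cons,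
      Multiset.map_singleton, Multiset.count_cons, Multiset.count_singleton]
    simp [Ne.symm hAlen, Ne.symm hBlen]
  have hcntM : ((M - {A, B}).map Segment.len).count U.len
      = (M.map Segment.len).count U.len := by
    conv_rhs => rw [hMsplit]
    rw [Multiset.map_add, Multiset.count_add, hcntpair]
    omega
  have hcntI : (mI.map Segment.len).count U.len = 0 := by
    rw [Multiset.count_eq_zero]
    intro hmem
    obtain ⟨s, hs, hlen⟩ := Multiset.mem_map.mp hmem
    exact absurd hlen (ne_of_lt (hmI s hs))
  have heven := speh_even_count hS U.len
  rw [Multiset.map_add, Multiset.count_add, Multiset.map_cons, Multiset.count_cons_self,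
    hcntM, hcntI] at heven
  obtain ⟨c, hc⟩ := heven
  obtain ⟨d, hd⟩ := hM U.len
  omega
lemma ladder_even_count (k : ℕ) (Δ : Fin (2 * k) → Segment)
    (hpair : ∀ (j : ℕ) (hj : 2 * j + 1 < 2 * k),
      Δ ⟨2 * j, Nat.lt_of_succ_lt hj⟩ = (Δ ⟨2 * j + 1, hj⟩).nu) (ℓ : ℤ) :
    Even (((Finset.univ.val.map Δ).map Segment.len).count ℓ) := by
  classical
  rw [Multiset.map_map, Multiset.count_map]
  have hcard : Multiset.card
        (Multiset.filter (fun a => ℓ = (Segment.len ∘ Δ) a) Finset.univ.val)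
      = ∑ a : Fin (2 * k), if ℓ = Segment.len (Δ a) then 1 else 0 := by
    rw [← Finset.card_filter]
    rfl
  rw [hcard]
  set f : ℕ → ℕ := fun q =>
    if h : q < 2 * k then (if ℓ = Segment.len (Δ ⟨q, h⟩) then 1 else 0) else 0 with hf
  have hfa : ∀ a : Fin (2 * k), (if ℓ = Segment.len (Δ a) then 1 else 0) = f a.val := by
    intro a
    rw [hf]
    simp only [a.isLt, dif_pos, Fin.eta]
  have h2 : (∑ a : Fin (2 * k), if ℓ = Segment.len (Δ a) then (1 : ℕ) else 0)
      = ∑ q ∈ Finset.range (2 * k), f q := by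
    rw [← Fin.sum_univ_eq_sum_range f (2 * k)]
    exact Finset.sum_congr rfl fun a _ => hfa a
  rw [h2]
  refine even_sum_pairs k f fun j => ?_
  by_cases hj : 2 * j + 1 < 2 * k
  · have h0 : 2 * j < 2 * k := by omega
    rw [hf]
    simp only [h0, hj, dif_pos]
    rw [hpair j hj, Segment.len_nu]
  · have h0 : ¬ (2 * j < 2 * k) := by omega
    rw [hf]
    simp only [h0, hj, dif_neg, not_false_iff]

/-- for a ladder `Δ₁,…,Δ_{2k}` with `Δ_{2j−1} = νΔ_{2j}` for all `j`, and an
index `i` (0-indexed here) with `a_i ≤ b_{i+1} + 1`, the multiset obtained by replacing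
`Δ_i, Δ_{i+1}` by `[a_{i+1}, b_i]` (together with `[a_i, b_{i+1}]` in case `a_i ≤ b_{i+1}`)
is not of Speh type. -/
theorem exchanged_multiset_not_speh (k : ℕ) (hk : 1 ≤ k) (Δ : Fin (2 * k) → Segment)
    (hladder : ∀ p q : Fin (2 * k), p < q →
      (Δ q).left < (Δ p).left ∧ (Δ q).right < (Δ p).right)
    (hpair : ∀ (j : ℕ) (hj : 2 * j + 1 < 2 * k),
      Δ ⟨2 * j, by omega⟩ = (Δ ⟨2 * j + 1, hj⟩).nu)
    (i : ℕ) (hi : i + 1 < 2 * k)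
    (hcond : (Δ ⟨i, by omega⟩).left ≤ (Δ ⟨i + 1, hi⟩).right + 1) :
    ¬ SpehType
      (Finset.univ.val.map Δ - ({Δ ⟨i, by omega⟩, Δ ⟨i + 1, hi⟩} : Multiset Segment)
        + ((⟨(Δ ⟨i + 1, hi⟩).left, (Δ ⟨i, by omega⟩).right, by
              have h1 := (hladder ⟨i, by omega⟩ ⟨i + 1, hi⟩
                (Fin.mk_lt_mk.mpr (Nat.lt_succ_self i))).1
              have h2 := (Δ (⟨i, by omega⟩ : Fin (2 * k))).le
              omega⟩ : Segment) ::ₘ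
          (if h : (Δ ⟨i, by omega⟩).left ≤ (Δ ⟨i + 1, hi⟩).right then
              {(⟨(Δ ⟨i, by omega⟩).left, (Δ ⟨i + 1, hi⟩).right, h⟩ : Segment)}
            else 0))) := by
  have hii : i < 2 * k := by omega
  have hlh := hladder ⟨i, hii⟩ ⟨i + 1, hi⟩ (Fin.mk_lt_mk.mpr (Nat.lt_succ_self i))
  refine key (Finset.univ.val.map Δ) (ladder_even_count k Δ hpair)
    (Δ ⟨i, hii⟩) (Δ ⟨i + 1, hi⟩)
    (Multiset.mem_map_of_mem Δ (Finset.mem_univ_val _))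
    (Multiset.mem_map_of_mem Δ (Finset.mem_univ_val _))
    hlh.1 hlh.2
    (⟨(Δ ⟨i + 1, hi⟩).left, (Δ ⟨i, hii⟩).right, by
        have h2 := (Δ (⟨i, hii⟩ : Fin (2 * k))).le
        have h3 := hlh.1
        omega⟩ : Segment) rfl rfl _ ?_
  intro s hs
  by_cases h : (Δ ⟨i, hii⟩).left ≤ (Δ ⟨i + 1, hi⟩).right
  · rw [dif_pos h] at hs
    rw [Multiset.mem_singleton] at hs
    subst hs
    show (Δ ⟨i + 1, hi⟩).right - (Δ ⟨i, hii⟩).left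
        < (Δ ⟨i, hii⟩).right - (Δ ⟨i + 1, hi⟩).left
    omega
  · rw [dif_neg h] at hs
    simp at hs
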